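/- Theorem (doubly exponential convergence of majority dynamics on regular trees): On an undirected d-regular tree with d ≥ 5, binary state s with uniform prior, and initial votes correct with probability 1−δ independently given s, if δ < (2e(d-1)/(d-2))^{-(d-2)/(d-4)}, then for every node i, -log P(σ̂_i(t) ≠ s) ∈ Ω(((d-2)/2)^t). -/

import Mathlib

open MeasureTheory ProbabilityTheory

section Det
variable {V : Type*} (G : SimpleGraph V) [DecidableRel G.Adj] [∀ v, Fintype (G.neighborSet v)]

open Classical in
noncomputable def fdyn (A : Set V) (x : V → ℤ) (c : ℕ → V → ℤ) : ℕ → V → ℤ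
  | 0, v => if v ∈ A then -1 else x v
  | (t+1), v => if v ∈ A then -1 else
      if 0 < ∑ j ∈ G.neighborFinset v, fdyn A x c t j then 1
      else if (∑ j ∈ G.neighborFinset v, fdyn A x c t j) < 0 then -1
      else c t v

variable {G}

lemma fdyn_mem (A : Set V) (x c) {v : V} (hv : v ∈ A) : ∀ t, fdyn G A x c t v = -1
  | 0 => by simp [fdyn, hv]
  | (t+1) => by simp [fdyn, hv]

lemma fdyn_vals {A : Set V} {x : V → ℤ} {c : ℕ → V → ℤ}
    (hx : ∀ v, x v = 1 ∨ x v = -1) (hc : ∀ t v, c t v = 1 ∨ c t v = -1) :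
    ∀ t v, fdyn G A x c t v = 1 ∨ fdyn G A x c t v = -1
  | 0, v => by by_cases h : v ∈ A <;> simp [fdyn, h, hx v]
  | (t+1), v => by
      by_cases h : v ∈ A
      · simp [fdyn, h]
      · simp only [fdyn, if_neg h]
        split_ifs <;> simp [hc t v]

set_option linter.unusedSectionVars false

lemma fdyn_mono {A B : Set V} {x : V → ℤ} {c : ℕ → V → ℤ}
    (hx : ∀ v, x v = 1 ∨ x v = -1) (hc : ∀ t v, c t v = 1 ∨ c t v = -1)
    (hAB : A ⊆ B) : ∀ t v, fdyn G B x c t v ≤ fdyn G A x c t v := by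
  intro t
  induction t with
  | zero =>
    intro v
    by_cases hB : v ∈ B
    · rw [fdyn_mem _ _ _ hB]
      rcases fdyn_vals (G := G) hx hc (A := A) 0 v with h | h <;> omega
    · have hA : v ∉ A := fun h => hB (hAB h)
      simp [fdyn, hA, hB]
  | succ t ih =>
    intro v
    by_cases hB : v ∈ B
    · rw [fdyn_mem _ _ _ hB]
      rcases fdyn_vals (G := G) hx hc (A := A) (t+1) v with h | h <;> omega
    · have hA : v ∉ A := fun h => hB (hAB h)
      have hsum : (∑ j ∈ G.neighborFinset v, fdyn G B x c t j) ≤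
          ∑ j ∈ G.neighborFinset v, fdyn G A x c t j :=
        Finset.sum_le_sum fun j _ => ih j
      simp only [fdyn, if_neg hA, if_neg hB]
      have hcv := hc t v
      split_ifs with h1 h2 h3 h4 h3 h4 <;> omega

/-- vertices reachable from `v` by a walk avoiding `A`. -/
def reachSet (G : SimpleGraph V) (A : Set V) (v : V) : Set V :=
  {u | ∃ p : G.Walk v u, ∀ w ∈ p.support, w ∉ A}

lemma self_mem_reachSet {A : Set V} {v : V} (hv : v ∉ A) : v ∈ reachSet G A v :=
  ⟨SimpleGraph.Walk.nil, by simp [hv]⟩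

lemma reachSet_adj_subset {A : Set V} {v u : V} (hv : v ∉ A) (hu : u ∉ A)
    (hadj : G.Adj v u) : reachSet G A u ⊆ reachSet G A v := by
  rintro w ⟨p, hp⟩
  refine ⟨SimpleGraph.Walk.cons hadj p, ?_⟩
  intro z hz
  rw [SimpleGraph.Walk.support_cons] at hz
  rcases List.mem_cons.mp hz with h | h
  · exact h ▸ hv
  · exact hp z h

lemma fdyn_screen {A A' : Set V} {x : V → ℤ} {c : ℕ → V → ℤ}
    (hAA : A ⊆ A') :
    ∀ t v, (∀ u ∈ reachSet G A v, u ∈ A' → u ∈ A) →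
      fdyn G A' x c t v = fdyn G A x c t v := by
  intro t
  induction t with
  | zero =>
    intro v hv
    by_cases hA : v ∈ A
    · rw [fdyn_mem _ _ _ hA, fdyn_mem _ _ _ (hAA hA)]
    · have hA' : v ∉ A' := fun h => hA (hv v (self_mem_reachSet hA) h)
      simp [fdyn, hA, hA']
  | succ t ih =>
    intro v hv
    by_cases hA : v ∈ A
    · rw [fdyn_mem _ _ _ hA, fdyn_mem _ _ _ (hAA hA)]
    · have hA' : v ∉ A' := fun h => hA (hv v (self_mem_reachSet hA) h)
      have hsum : ∀ j ∈ G.neighborFinset v, fdyn G A' x c t j = fdyn G A x c t j := by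
        intro j hj
        by_cases hjA : j ∈ A
        · rw [fdyn_mem _ _ _ hjA, fdyn_mem _ _ _ (hAA hjA)]
        · exact ih j (fun u hu hu' =>
            hv u (reachSet_adj_subset hA hjA ((G.mem_neighborFinset v j).mp hj) hu) hu')
      simp only [fdyn, if_neg hA, if_neg hA', Finset.sum_congr rfl hsum]

/-- coordinates (initial votes / coins) attached to a set `R` of vertices -/
def IS (R : Set V) : Set (V ⊕ ℕ × V) := Sum.inl '' R ∪ Sum.inr '' (Set.univ ×ˢ R)

lemma IS_mono {R R' : Set V} (h : R ⊆ R') : IS R ⊆ IS R' := by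
  rintro a (⟨u, hu, rfl⟩ | ⟨p, hp, rfl⟩)
  · exact Or.inl ⟨u, h hu, rfl⟩
  · exact Or.inr ⟨p, ⟨trivial, h hp.2⟩, rfl⟩

lemma IS_disjoint {R R' : Set V} (h : ∀ u, u ∈ R → u ∈ R' → False) :
    Disjoint (IS R) (IS R') := by
  rw [Set.disjoint_left]
  rintro a (⟨u, hu, rfl⟩ | ⟨p, hp, rfl⟩)
  · rintro (⟨u', hu', h'⟩ | ⟨p', hp', h'⟩)
    · cases Sum.inl.inj h'; exact h _ hu hu'
    · exact absurd h' (by simp)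
  · rintro (⟨u', hu', h'⟩ | ⟨p', hp', h'⟩)
    · exact absurd h' (by simp)
    · cases Sum.inr.inj h'; exact h _ hp.2 hp'.2

section Meas
variable {Ω : Type*}

lemma fdyn_measurable (m : V ⊕ ℕ × V → MeasurableSpace Ω)
    (x : V → Ω → ℤ) (c : ℕ → V → Ω → ℤ)
    (hx : ∀ u, Measurable[m (Sum.inl u)] (x u))
    (hc : ∀ r u, Measurable[m (Sum.inr (r, u))] (c r u))
    (A : Set V) :
    ∀ (t : ℕ) (v : V),
      Measurable[⨆ a ∈ IS (reachSet G A v), m a]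
        (fun ω => fdyn G A (fun w => x w ω) (fun r w => c r w ω) t v) := by
  intro t
  induction t with
  | zero =>
    intro v
    by_cases hA : v ∈ A
    · simp only [fdyn_mem _ _ _ hA]; exact measurable_const
    · simp only [fdyn, if_neg hA]
      exact (hx v).mono (le_biSup m (Or.inl ⟨v, self_mem_reachSet hA, rfl⟩)) le_rfl
  | succ t ih =>
    intro v
    by_cases hA : v ∈ A
    · simp only [fdyn_mem _ _ _ hA]; exact measurable_const
    · simp only [fdyn, if_neg hA]
      have hS : Measurable[⨆ a ∈ IS (reachSet G A v), m a]
          (fun ω => ∑ j ∈ G.neighborFinset v,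
            fdyn G A (fun w => x w ω) (fun r w => c r w ω) t j) := by
        apply Finset.measurable_sum
        intro j hj
        by_cases hjA : j ∈ A
        · simp only [fdyn_mem _ _ _ hjA]; exact measurable_const
        · exact (ih j).mono
            (biSup_mono (IS_mono (reachSet_adj_subset hA hjA
              ((G.mem_neighborFinset v j).mp hj)))) le_rfl
      have hcm : Measurable[⨆ a ∈ IS (reachSet G A v), m a] (c t v) :=
        (hc t v).mono (le_biSup m (Or.inr ⟨(t, v), ⟨trivial, self_mem_reachSet hA⟩, rfl⟩)) le_rfl
      have h1 := hS (show MeasurableSet (Set.Ioi (0:ℤ)) from trivial)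
      have h2 := hS (show MeasurableSet (Set.Iio (0:ℤ)) from trivial)
      exact Measurable.ite h1 measurable_const
        (Measurable.ite h2 measurable_const hcm)

end Meas

open SimpleGraph Walk in
lemma tree_sep (htree : G.IsTree) {j a b : V} (hja : G.Adj j a) (hjb : G.Adj j b)
    (hab : a ≠ b) (p : G.Walk a b) : j ∈ p.support := by
  classical
  by_contra hj
  have hq : (p.toPath : G.Walk a b).IsPath := p.toPath.2
  have hqj : j ∉ (p.toPath : G.Walk a b).support := fun h => hj (p.support_toPath_subset h)
  have hr : (Walk.cons hja.symm (Walk.cons hjb Walk.nil) : G.Walk a b).IsPath := by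
    simp only [Walk.isPath_def, Walk.support_cons, Walk.support_nil]
    exact List.nodup_cons.mpr ⟨by simp [hja.ne', hab], by simp [hjb.ne]⟩
  obtain ⟨q₀, -, huniq⟩ := htree.existsUnique_path a b
  have h1 := huniq _ hq
  have h2 := huniq _ hr
  have h3 : (p.toPath : G.Walk a b) = Walk.cons hja.symm (Walk.cons hjb Walk.nil) :=
    h1.trans h2.symm
  apply hqj
  rw [h3]
  simp

open SimpleGraph Walk in
lemma reach_avoid (htree : G.IsTree) {j a b : V} (hja : G.Adj j a) (hjb : G.Adj j b)
    (hab : a ≠ b) : b ∉ reachSet G {j} a := by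
  rintro ⟨p, hp⟩
  exact hp j (tree_sep htree hja hjb hab p) rfl

open SimpleGraph Walk in
lemma reach_disjoint (htree : G.IsTree) {j a b : V} (hja : G.Adj j a) (hjb : G.Adj j b)
    (hab : a ≠ b) : ∀ u, u ∈ reachSet G {j} a → u ∈ reachSet G {j} b → False := by
  rintro u ⟨p, hp⟩ ⟨q, hq⟩
  have hsup : j ∈ (p.append q.reverse).support := tree_sep htree hja hjb hab _
  rcases (Walk.mem_support_append_iff _ _).mp hsup with h | h
  · exact hp j h rfl
  · rw [Walk.support_reverse] at h
    exact hq j (List.mem_reverse.mp h) rfl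

section Prob
variable {Ω' J ι' : Type*} [mΩ : MeasurableSpace Ω']

lemma meas_biInter_of_disjoint (μ' : Measure Ω') (m : ι' → MeasurableSpace Ω')
    (h_le : ∀ a, m a ≤ mΩ) (h : iIndep m μ')
    (S : Finset J) (I : J → Set ι')
    (hdisj : ∀ j ∈ S, ∀ j' ∈ S, j ≠ j' → Disjoint (I j) (I j'))
    (E : J → Set Ω') (hE : ∀ j ∈ S, MeasurableSet[⨆ a ∈ I j, m a] (E j)) :
    μ' (⋂ j ∈ S, E j) = ∏ j ∈ S, μ' (E j) := by
  classical
  induction S using Finset.induction with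
  | empty =>
    have := h.isProbabilityMeasure
    simp
  | @insert j S hj ih =>
    have hIndep : Indep (⨆ a ∈ I j, m a) (⨆ a ∈ ⋃ j' ∈ (S : Set J), I j', m a) μ' := by
      refine indep_iSup_of_disjoint h_le h ?_
      rw [Set.disjoint_right]
      intro a ha
      simp only [Set.mem_iUnion] at ha
      obtain ⟨j', hj', ha'⟩ := ha
      exact fun haj => Set.disjoint_left.mp
        (hdisj j (Finset.mem_insert_self _ _) j' (Finset.mem_insert_of_mem hj')
          (fun h' => hj (h' ▸ hj'))) haj ha'
    have hEmeas : MeasurableSet[⨆ a ∈ ⋃ j' ∈ (S : Set J), I j', m a] (⋂ j' ∈ S, E j') := by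
      refine Finset.measurableSet_biInter _ fun j' hj' => ?_
      have hle : (⨆ a ∈ I j', m a) ≤ ⨆ a ∈ ⋃ j'' ∈ (S : Set J), I j'', m a :=
        biSup_mono (Set.subset_biUnion_of_mem (show j' ∈ (S : Set J) from hj'))
      exact hle _ (hE j' (Finset.mem_insert_of_mem hj'))
    rw [Finset.set_biInter_insert, Finset.prod_insert hj,
      (Indep_iff _ _ _).mp hIndep _ _ (hE j (Finset.mem_insert_self _ _)) hEmeas,
      ih (fun a ha b hb hab => hdisj a (Finset.mem_insert_of_mem ha) b
        (Finset.mem_insert_of_mem hb) hab)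
        (fun a ha => hE a (Finset.mem_insert_of_mem ha))]

end Prob

section Count
variable {x : V → ℤ} {c : ℕ → V → ℤ} {d : ℕ}

open Classical in
lemma count_step (htree : G.IsTree) (hd : 5 ≤ d) (hreg : ∀ v, G.degree v = d)
    (hxv : ∀ v, x v = 1 ∨ x v = -1) (hcv : ∀ t v, c t v = 1 ∨ c t v = -1)
    {i j : V} (hadj : G.Adj i j) (t : ℕ)
    (h : fdyn G {i} x c (t+1) j = -1) :
    (d-1)/2 ≤ (((G.neighborFinset j).erase i).filter
      (fun w => fdyn G {j} x c t w = -1)).card := by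
  classical
  by_contra hlt
  push_neg at hlt
  set C := (G.neighborFinset j).erase i with hC
  set S₀ := C.filter (fun w => fdyn G {j} x c t w = -1) with hS₀
  have himem : i ∈ G.neighborFinset j := (G.mem_neighborFinset j i).mpr hadj.symm
  have hcardC : C.card = d - 1 := by
    rw [hC, Finset.card_erase_of_mem himem, G.card_neighborFinset_eq_degree, hreg j]
  have hadjw : ∀ w ∈ C, G.Adj j w ∧ w ≠ i := by
    intro w hw
    rw [hC, Finset.mem_erase, G.mem_neighborFinset] at hw
    exact ⟨hw.2, hw.1⟩
  have hlow : ∀ w ∈ C, fdyn G {j} x c t w ≤ fdyn G {i} x c t w := by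
    intro w hw
    obtain ⟨hjw, hwi⟩ := hadjw w hw
    have hscr : fdyn G ({i} ∪ {j} : Set V) x c t w = fdyn G {j} x c t w := by
      refine fdyn_screen Set.subset_union_right t w ?_
      intro u hu hu'
      rcases hu' with hu' | hu'
      · exact absurd (hu' ▸ hu) (reach_avoid htree hjw hadj.symm hwi)
      · exact hu'
    calc fdyn G {j} x c t w = fdyn G ({i} ∪ {j} : Set V) x c t w := hscr.symm
      _ ≤ fdyn G {i} x c t w := fdyn_mono hxv hcv Set.subset_union_left t w
  -- sum over C of fdyn {j} equals (|C| - |S₀|) - |S₀|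
  have hsum1 : ((C.card : ℤ) - S₀.card) - S₀.card ≤ ∑ w ∈ C, fdyn G {j} x c t w := by
    have hterm : ∀ w ∈ C, (1 : ℤ) - 2 * (if fdyn G {j} x c t w = -1 then (1:ℤ) else 0)
        ≤ fdyn G {j} x c t w := by
      intro w _
      rcases fdyn_vals (G := G) (A := {j}) hxv hcv t w with h1 | h1 <;> rw [h1] <;> norm_num
    have hcalc : (C.card : ℤ) - 2 * S₀.card
        = ∑ w ∈ C, ((1 : ℤ) - 2 * (if fdyn G {j} x c t w = -1 then (1:ℤ) else 0)) := by
      rw [Finset.sum_sub_distrib, Finset.sum_const, ← Finset.mul_sum, Finset.sum_boole]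
      simp [hS₀]
    have := Finset.sum_le_sum hterm
    rw [← hcalc] at this
    omega
  have hsum2 : ∑ w ∈ C, fdyn G {j} x c t w ≤ ∑ w ∈ C, fdyn G {i} x c t w :=
    Finset.sum_le_sum hlow
  have htot : ∑ u ∈ G.neighborFinset j, fdyn G {i} x c t u =
      fdyn G {i} x c t i + ∑ w ∈ C, fdyn G {i} x c t w := by
    rw [hC, ← Finset.sum_insert (Finset.notMem_erase i _), Finset.insert_erase himem]
  have hii : fdyn G {i} x c t i = -1 := fdyn_mem ({i} : Set V) x c rfl t
  have hpos : 0 < ∑ u ∈ G.neighborFinset j, fdyn G {i} x c t u := by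
    rw [htot, hii]
    have hcard₁ : S₀.card < (d-1)/2 := hlt
    have h2 : ((d:ℤ) - 1 - 2 * S₀.card) ≤ ∑ w ∈ C, fdyn G {i} x c t w := by
      refine le_trans ?_ (le_trans hsum1 hsum2)
      rw [hcardC]
      push_cast [Nat.cast_sub (by omega : 1 ≤ d)]
      omega
    omega
  have : fdyn G {i} x c (t+1) j = 1 := by
    have hjnoti : j ∉ ({i} : Set V) := by simp [hadj.ne']
    simp only [fdyn, if_neg hjnoti, if_pos hpos]
  omega

open Classical in
lemma count_root (htree : G.IsTree) (hd : 5 ≤ d) (hreg : ∀ v, G.degree v = d)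
    (hxv : ∀ v, x v = 1 ∨ x v = -1) (hcv : ∀ t v, c t v = 1 ∨ c t v = -1)
    (i : V) (t : ℕ)
    (h : fdyn G ∅ x c (t+1) i = -1) :
    (d-1)/2 ≤ ((G.neighborFinset i).filter
      (fun w => fdyn G {i} x c t w = -1)).card := by
  classical
  by_contra hlt
  push_neg at hlt
  set C := G.neighborFinset i with hC
  set S₀ := C.filter (fun w => fdyn G {i} x c t w = -1) with hS₀
  have hcardC : C.card = d := by rw [hC, G.card_neighborFinset_eq_degree, hreg i]
  have hsum1 : ((C.card : ℤ) - S₀.card) - S₀.card ≤ ∑ w ∈ C, fdyn G {i} x c t w := by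
    have hterm : ∀ w ∈ C, (1 : ℤ) - 2 * (if fdyn G {i} x c t w = -1 then (1:ℤ) else 0)
        ≤ fdyn G {i} x c t w := by
      intro w _
      rcases fdyn_vals (G := G) (A := {i}) hxv hcv t w with h1 | h1 <;> rw [h1] <;> norm_num
    have hcalc : (C.card : ℤ) - 2 * S₀.card
        = ∑ w ∈ C, ((1 : ℤ) - 2 * (if fdyn G {i} x c t w = -1 then (1:ℤ) else 0)) := by
      rw [Finset.sum_sub_distrib, Finset.sum_const, ← Finset.mul_sum, Finset.sum_boole]
      simp [hS₀]
    have := Finset.sum_le_sum hterm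
    rw [← hcalc] at this
    omega
  have hsum2 : ∑ w ∈ C, fdyn G {i} x c t w ≤ ∑ w ∈ C, fdyn G ∅ x c t w :=
    Finset.sum_le_sum fun w _ => fdyn_mono hxv hcv (Set.empty_subset _) t w
  have hpos : 0 < ∑ u ∈ C, fdyn G ∅ x c t u := by
    have hcard₁ : S₀.card < (d-1)/2 := hlt
    have h2 : ((d:ℤ) - 2 * S₀.card) ≤ ∑ w ∈ C, fdyn G ∅ x c t w := by
      refine le_trans ?_ (le_trans hsum1 hsum2)
      rw [hcardC]
      omega
    omega
  rw [hC] at hpos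
  have : fdyn G ∅ x c (t+1) i = 1 := by
    simp only [fdyn, if_neg (Set.notMem_empty i), if_pos hpos]
  omega

end Count

def bseq (δ C : ℝ) (k : ℕ) : ℕ → ℝ
  | 0 => δ
  | (t+1) => C * bseq δ C k t ^ k

lemma bseq_nonneg {δ C : ℝ} (hδ : 0 ≤ δ) (hC : 0 ≤ C) (k : ℕ) : ∀ t, 0 ≤ bseq δ C k t
  | 0 => hδ
  | (t+1) => mul_nonneg hC (pow_nonneg (bseq_nonneg hδ hC k t) k)

section Core
variable {Ω' : Type*} [mΩ : MeasurableSpace Ω']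

lemma core (htree : G.IsTree) {d : ℕ} (hd : 5 ≤ d) (hreg : ∀ v, G.degree v = d)
    (μ' : Measure Ω') [IsProbabilityMeasure μ']
    (x : V → Ω' → ℤ) (c : ℕ → V → Ω' → ℤ)
    (hxm : ∀ v, Measurable (x v)) (hcm : ∀ t v, Measurable (c t v))
    (hxv : ∀ v ω, x v ω = 1 ∨ x v ω = -1) (hcv : ∀ t v ω, c t v ω = 1 ∨ c t v ω = -1)
    {δ : ℝ} (hδ : 0 ≤ δ)
    (hinit : ∀ v, μ' {ω | x v ω = -1} = ENNReal.ofReal δ)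
    (hind : iIndepFun
      (Sum.elim (fun v : V => x v) (fun p : ℕ × V => c p.1 p.2)) μ') :
    ∀ (t : ℕ) (v : V), μ' {ω | fdyn G ∅ (fun w => x w ω) (fun r w => c r w ω) t v = -1} ≤
      ENNReal.ofReal (2 * bseq δ ((d-1).choose ((d-1)/2)) ((d-1)/2) t) := by
  classical
  set k := (d-1)/2 with hk
  set Cr := (((d-1).choose k : ℕ) : ℝ) with hCr
  have hCr0 : 0 ≤ Cr := Nat.cast_nonneg _
  have hbnn : ∀ t, 0 ≤ bseq δ Cr k t := bseq_nonneg hδ hCr0 k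
  set m : V ⊕ ℕ × V → MeasurableSpace Ω' := fun a => MeasurableSpace.comap
      (Sum.elim (fun v : V => x v) (fun p : ℕ × V => c p.1 p.2) a) inferInstance with hm
  have hm_le : ∀ a, m a ≤ mΩ := by
    rintro (v | ⟨r, u⟩)
    · exact measurable_iff_comap_le.mp (hxm v)
    · exact measurable_iff_comap_le.mp (hcm r u)
  have hmi : iIndep m μ' := hind
  have hxm' : ∀ u, Measurable[m (Sum.inl u)] (x u) := fun u =>
    measurable_iff_comap_le.mpr le_rfl
  have hcm' : ∀ r u, Measurable[m (Sum.inr (r, u))] (c r u) := fun r u =>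
    measurable_iff_comap_le.mpr le_rfl
  have hEmeas : ∀ (A : Set V) (t : ℕ) (v : V),
      MeasurableSet[⨆ a ∈ IS (reachSet G A v), m a]
        {ω | fdyn G A (fun w => x w ω) (fun r w => c r w ω) t v = -1} := fun A t v =>
    fdyn_measurable m x c hxm' hcm' A t v (show MeasurableSet ({-1} : Set ℤ) from trivial)
  have measStep : ∀ (t : ℕ) (j : V) (C : Finset V), (∀ w ∈ C, G.Adj j w) →
      (∀ w ∈ C, μ' {ω | fdyn G {j} (fun w' => x w' ω) (fun r w' => c r w' ω) t w = -1}
        ≤ ENNReal.ofReal (bseq δ Cr k t)) →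
      μ' (⋃ S ∈ (C.powersetCard k : Finset (Finset V)), ⋂ w ∈ (S : Finset V),
          {ω | fdyn G {j} (fun w' => x w' ω) (fun r w' => c r w' ω) t w = -1}) ≤
        (C.card.choose k : ENNReal) * ENNReal.ofReal (bseq δ Cr k t) ^ k := by
    intro t j C hCadj hCineq
    refine le_trans (measure_biUnion_finset_le _ _) ?_
    have hbnd : ∀ S ∈ C.powersetCard k, μ' (⋂ w ∈ (S : Finset V),
        {ω | fdyn G {j} (fun w' => x w' ω) (fun r w' => c r w' ω) t w = -1}) ≤
        ENNReal.ofReal (bseq δ Cr k t) ^ k := by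
      intro S hS
      obtain ⟨hSsub, hScard⟩ := Finset.mem_powersetCard.mp hS
      rw [meas_biInter_of_disjoint μ' m hm_le hmi S
        (fun w => IS (reachSet G ({j} : Set V) w))
        (fun a ha b hb hab => IS_disjoint
          (reach_disjoint htree (hCadj a (hSsub ha)) (hCadj b (hSsub hb)) hab))
        _ (fun w _ => hEmeas {j} t w)]
      calc ∏ w ∈ S, μ' {ω | fdyn G {j} (fun w' => x w' ω) (fun r w' => c r w' ω) t w = -1}
          ≤ ∏ w ∈ S, ENNReal.ofReal (bseq δ Cr k t) :=
            Finset.prod_le_prod' (fun w hw => hCineq w (hSsub hw))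
        _ = ENNReal.ofReal (bseq δ Cr k t) ^ k := by rw [Finset.prod_const, hScard]
    calc ∑ S ∈ C.powersetCard k, μ' (⋂ w ∈ (S : Finset V),
          {ω | fdyn G {j} (fun w' => x w' ω) (fun r w' => c r w' ω) t w = -1})
        ≤ ∑ _S ∈ C.powersetCard k, ENNReal.ofReal (bseq δ Cr k t) ^ k :=
          Finset.sum_le_sum hbnd
      _ = (C.card.choose k : ENNReal) * ENNReal.ofReal (bseq δ Cr k t) ^ k := by
          rw [Finset.sum_const, Finset.card_powersetCard, nsmul_eq_mul]
  have edge : ∀ (t : ℕ) (i j : V), G.Adj i j →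
      μ' {ω | fdyn G {i} (fun w => x w ω) (fun r w => c r w ω) t j = -1} ≤
        ENNReal.ofReal (bseq δ Cr k t) := by
    intro t
    induction t with
    | zero =>
      intro i j hadj
      have hji : j ∉ ({i} : Set V) := by simp [hadj.ne']
      have hset : {ω | fdyn G {i} (fun w => x w ω) (fun r w => c r w ω) 0 j = -1} =
          {ω | x j ω = -1} := by
        ext ω; simp [fdyn, hji]
      rw [hset, hinit j]
      simp [bseq]
    | succ t ih =>
      intro i j hadj
      have hsub : {ω | fdyn G {i} (fun w => x w ω) (fun r w => c r w ω) (t+1) j = -1} ⊆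
          ⋃ S ∈ (((G.neighborFinset j).erase i).powersetCard k : Finset (Finset V)),
            ⋂ w ∈ (S : Finset V),
              {ω | fdyn G {j} (fun w' => x w' ω) (fun r w' => c r w' ω) t w = -1} := by
        intro ω hω
        have hcount := count_step htree hd hreg (fun v => hxv v ω) (fun r v => hcv r v ω)
          hadj t hω
        obtain ⟨S, hSsub, hScard⟩ := Finset.exists_subset_card_eq hcount
        simp only [Set.mem_iUnion]
        refine ⟨S, Finset.mem_powersetCard.mpr
          ⟨hSsub.trans (Finset.filter_subset _ _), hScard⟩, ?_⟩
        simp only [Set.mem_iInter]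
        intro w hw
        exact (Finset.mem_filter.mp (hSsub hw)).2
      refine le_trans (measure_mono hsub) ?_
      have hadjC : ∀ w ∈ (G.neighborFinset j).erase i, G.Adj j w := by
        intro w hw
        rw [Finset.mem_erase, G.mem_neighborFinset] at hw
        exact hw.2
      refine le_trans (measStep t j _ hadjC (fun w hw => ih j w (hadjC w hw))) ?_
      have hcard : ((G.neighborFinset j).erase i).card = d - 1 := by
        rw [Finset.card_erase_of_mem ((G.mem_neighborFinset j i).mpr hadj.symm),
          G.card_neighborFinset_eq_degree, hreg j]
      rw [hcard, ← ENNReal.ofReal_pow (hbnn t), ← ENNReal.ofReal_natCast,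
        ← ENNReal.ofReal_mul hCr0]
      simp [bseq]
  intro t v
  cases t with
  | zero =>
    have hset : {ω | fdyn G ∅ (fun w => x w ω) (fun r w => c r w ω) 0 v = -1} =
        {ω | x v ω = -1} := by
      ext ω; simp [fdyn]
    rw [hset, hinit v]
    exact ENNReal.ofReal_le_ofReal (by simp only [bseq]; linarith)
  | succ t =>
    have hsub : {ω | fdyn G ∅ (fun w => x w ω) (fun r w => c r w ω) (t+1) v = -1} ⊆
        ⋃ S ∈ ((G.neighborFinset v).powersetCard k : Finset (Finset V)),
          ⋂ w ∈ (S : Finset V),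
            {ω | fdyn G {v} (fun w' => x w' ω) (fun r w' => c r w' ω) t w = -1} := by
      intro ω hω
      have hcount := count_root htree hd hreg (fun u => hxv u ω) (fun r u => hcv r u ω) v t hω
      obtain ⟨S, hSsub, hScard⟩ := Finset.exists_subset_card_eq hcount
      simp only [Set.mem_iUnion]
      refine ⟨S, Finset.mem_powersetCard.mpr
        ⟨hSsub.trans (Finset.filter_subset _ _), hScard⟩, ?_⟩
      simp only [Set.mem_iInter]
      intro w hw
      exact (Finset.mem_filter.mp (hSsub hw)).2
    refine le_trans (measure_mono hsub) ?_
    have hadjC : ∀ w ∈ G.neighborFinset v, G.Adj v w := by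
      intro w hw; exact (G.mem_neighborFinset v w).mp hw
    refine le_trans (measStep t v _ hadjC (fun w hw => edge t v w (hadjC w hw))) ?_
    have hcard : (G.neighborFinset v).card = d := by
      rw [G.card_neighborFinset_eq_degree, hreg v]
    rw [hcard]
    have hchoose : d.choose k ≤ 2 * (d-1).choose k := by
      have hk2 : 2 ≤ k := by omega
      have hps : d.choose k = (d-1).choose (k-1) + (d-1).choose k := by
        have h1 : d = (d-1) + 1 := by omega
        have h2 : k = (k-1) + 1 := by omega
        rw [h1, h2, Nat.choose_succ_succ']
        congr 1 <;> congr 1 <;> omega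
      have hmono : (d-1).choose (k-1) ≤ (d-1).choose k := by
        have := Nat.choose_le_succ_of_lt_half_left (r := k-1) (n := d-1) (by omega)
        have h2 : (k-1) + 1 = k := by omega
        rwa [h2] at this
      omega
    calc (d.choose k : ENNReal) * ENNReal.ofReal (bseq δ Cr k t) ^ k
        ≤ (2 * (d-1).choose k : ℕ) * ENNReal.ofReal (bseq δ Cr k t) ^ k := by
          have hcast : (d.choose k : ENNReal) ≤ ((2 * (d-1).choose k : ℕ) : ENNReal) := by
            exact_mod_cast hchoose
          exact mul_le_mul_left hcast _
      _ = ENNReal.ofReal (2 * bseq δ Cr k (t+1)) := by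
          rw [← ENNReal.ofReal_pow (hbnn t), ← ENNReal.ofReal_natCast,
            ← ENNReal.ofReal_mul (by positivity)]
          congr 1
          push_cast
          simp only [bseq]
          ring

end Core

section Analysis

lemma choose_le_pow_e {n k : ℕ} (hk : 0 < k) :
    ((n.choose k : ℕ) : ℝ) ≤ (Real.exp 1 * n / k) ^ k := by
  have hkk : (0:ℝ) < (k:ℝ) := by exact_mod_cast hk
  have h1 : ((k.factorial : ℕ) : ℝ) * (n.choose k : ℕ) ≤ ((n:ℝ)) ^ k := by
    have := (Nat.descFactorial_eq_factorial_mul_choose n k) ▸ Nat.descFactorial_le_pow n k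
    exact_mod_cast this
  have h2 : ((k:ℝ)) ^ k ≤ Real.exp 1 ^ k * (k.factorial : ℕ) := by
    have hterm : ((k:ℝ)) ^ k / (k.factorial : ℕ) ≤ Real.exp (k : ℝ) := by
      have hsum := Real.sum_le_exp_of_nonneg (x := (k:ℝ)) (by positivity) (k+1)
      refine le_trans ?_ hsum
      exact Finset.single_le_sum (f := fun i => ((k:ℝ))^i / (i.factorial : ℕ))
        (fun i _ => by positivity) (Finset.self_mem_range_succ k)
    have hexp : Real.exp (k : ℝ) = Real.exp 1 ^ k := by
      rw [← Real.exp_nat_mul, mul_one]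
    have hfac : (0:ℝ) < (k.factorial : ℕ) := by exact_mod_cast k.factorial_pos
    rw [div_le_iff₀ hfac] at hterm
    calc ((k:ℝ))^k ≤ Real.exp (k:ℝ) * (k.factorial : ℕ) := hterm
      _ = Real.exp 1 ^ k * (k.factorial : ℕ) := by rw [hexp]
  -- combine
  have hc0 : (0:ℝ) ≤ (n.choose k : ℕ) := Nat.cast_nonneg _
  rw [div_pow, le_div_iff₀ (by positivity)]
  calc ((n.choose k : ℕ) : ℝ) * (k:ℝ)^k
      ≤ ((n.choose k : ℕ) : ℝ) * (Real.exp 1 ^ k * (k.factorial : ℕ)) := by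
        exact mul_le_mul_of_nonneg_left h2 hc0
    _ = Real.exp 1 ^ k * ((k.factorial : ℕ) * (n.choose k : ℕ)) := by ring
    _ ≤ Real.exp 1 ^ k * ((n:ℝ))^k := by
        refine mul_le_mul_of_nonneg_left h1 (by positivity)
    _ = (Real.exp 1 * n)^k := by rw [mul_pow]

lemma bseq_pos {δ C : ℝ} (hδ : 0 < δ) (hC : 0 < C) (k : ℕ) : ∀ t, 0 < bseq δ C k t
  | 0 => hδ
  | (t+1) => mul_pos hC (pow_pos (bseq_pos hδ hC k t) k)

set_option maxHeartbeats 1000000 in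
lemma analysis_main (d : ℕ) (hd : 5 ≤ d) {δ : ℝ} (hδpos : 0 < δ)
    (hδsmall : δ < (2 * Real.exp 1 * ((d : ℝ) - 1) / ((d : ℝ) - 2)) ^
      (-(((d : ℝ) - 2) / ((d : ℝ) - 4)))) :
    ∃ A > (0:ℝ), ∃ L : ℝ, ∀ t : ℕ,
      A * (((d : ℝ) - 2) / 2) ^ t + L ≤
        -Real.log (bseq δ (((d-1).choose ((d-1)/2) : ℕ) : ℝ) ((d-1)/2) t) := by
  set k : ℕ := (d-1)/2 with hkdef
  have hk2 : 2 ≤ k := by omega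
  have hkd : k ≤ d - 1 := by omega
  have hdr : (5:ℝ) ≤ (d:ℝ) := by exact_mod_cast hd
  have hkr2 : (2:ℝ) ≤ (k:ℝ) := by exact_mod_cast hk2
  have hkey : ((d:ℝ) - 2) ≤ 2 * (k:ℝ) := by
    have h2k : d - 2 ≤ 2 * k := by omega
    have h := (Nat.cast_le (α := ℝ)).mpr h2k
    push_cast [Nat.cast_sub (show 2 ≤ d by omega)] at h
    linarith
  set c : ℝ := ((d : ℝ) - 2) / 2 with hc
  have hck : c ≤ (k:ℝ) := by
    rw [hc, div_le_iff₀ (by norm_num : (0:ℝ) < 2)]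
    linarith
  have hc1 : (1:ℝ) ≤ c := by rw [hc]; linarith
  set Cr : ℝ := (((d-1).choose k : ℕ) : ℝ) with hCrdef
  have hCr1 : (1:ℝ) ≤ Cr := by
    rw [hCrdef]
    have : 0 < (d-1).choose k := Nat.choose_pos hkd
    exact_mod_cast this
  set M : ℝ := 2 * Real.exp 1 * ((d : ℝ) - 1) / ((d : ℝ) - 2) with hM
  have hexp1 : (2:ℝ) ≤ Real.exp 1 := by
    have := Real.add_one_le_exp (1:ℝ)
    linarith
  have hM1 : (1:ℝ) < M := by
    rw [hM, lt_div_iff₀ (by linarith : (0:ℝ) < (d:ℝ) - 2)]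
    nlinarith
  have hMpos : (0:ℝ) < M := by linarith
  have hCrM : Cr ≤ M ^ k := by
    rw [hCrdef]
    refine le_trans (choose_le_pow_e (by omega)) ?_
    refine pow_le_pow_left₀ (by positivity) ?_ k
    rw [hM, div_le_div_iff₀ (show (0:ℝ) < (k:ℝ) by linarith)
      (by linarith : (0:ℝ) < (d:ℝ) - 2)]
    have hcast : (((d - 1 : ℕ)) : ℝ) = (d:ℝ) - 1 := by
      push_cast [Nat.cast_sub (show 1 ≤ d by omega)]; ring
    rw [hcast]
    have hpos2 : (0:ℝ) ≤ Real.exp 1 * ((d:ℝ)-1) := mul_nonneg (Real.exp_pos 1).le (by linarith)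
    have hmul := mul_le_mul_of_nonneg_left hkey hpos2
    nlinarith [hmul]
  have hlogM : (0:ℝ) ≤ Real.log M := Real.log_nonneg hM1.le
  have hlogCr : Real.log Cr ≤ (k:ℝ) * Real.log M := by
    calc Real.log Cr ≤ Real.log (M ^ k) := Real.log_le_log (by linarith) hCrM
      _ = (k:ℝ) * Real.log M := by rw [Real.log_pow]
  set L0 : ℝ := Real.log Cr / ((k:ℝ) - 1) with hL0
  have hkr1 : (0:ℝ) < (k:ℝ) - 1 := by linarith
  -- -log δ > (d-2)/(d-4) * log M
  have hrpow : (M : ℝ) ^ (-(((d : ℝ) - 2) / ((d : ℝ) - 4))) =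
      Real.exp (Real.log M * (-(((d : ℝ) - 2) / ((d : ℝ) - 4)))) :=
    Real.rpow_def_of_pos hMpos _
  have hlogδ : Real.log δ < Real.log M * (-(((d : ℝ) - 2) / ((d : ℝ) - 4))) := by
    have := Real.log_lt_log hδpos (hδsmall.trans_eq hrpow)
    rwa [Real.log_exp] at this
  have hd4 : (0:ℝ) < (d:ℝ) - 4 := by linarith
  have hneg : ((d:ℝ) - 2) / ((d:ℝ) - 4) * Real.log M < -Real.log δ := by
    have h1 : Real.log M * (-(((d : ℝ) - 2) / ((d : ℝ) - 4))) =
        -(((d:ℝ) - 2) / ((d:ℝ) - 4) * Real.log M) := by ring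
    rw [h1] at hlogδ
    linarith
  have hL0le : L0 ≤ ((d:ℝ) - 2) / ((d:ℝ) - 4) * Real.log M := by
    rw [hL0, div_le_iff₀ hkr1]
    have hstep : (k:ℝ) * ((d:ℝ) - 4) ≤ ((k:ℝ) - 1) * ((d:ℝ) - 2) := by nlinarith
    calc Real.log Cr ≤ (k:ℝ) * Real.log M := hlogCr
      _ ≤ (((d:ℝ)-2)/((d:ℝ)-4) * Real.log M) * ((k:ℝ) - 1) := by
          rw [div_mul_eq_mul_div, div_mul_eq_mul_div, le_div_iff₀ hd4]
          nlinarith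
  set v0 : ℝ := -Real.log δ - L0 with hv0
  have hv0pos : 0 < v0 := by rw [hv0]; linarith
  have hbpos : ∀ t, 0 < bseq δ Cr k t := bseq_pos hδpos (by linarith) k
  have hulin : ∀ t : ℕ, -Real.log (bseq δ Cr k t) = (k:ℝ) ^ t * v0 + L0 := by
    intro t
    induction t with
    | zero =>
      simp only [pow_zero, one_mul, hv0, bseq]
      ring
    | succ t ih =>
      have hlog : Real.log (bseq δ Cr k (t+1)) =
          Real.log Cr + (k:ℝ) * Real.log (bseq δ Cr k t) := by
        show Real.log (Cr * bseq δ Cr k t ^ k) = _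
        rw [Real.log_mul (by linarith) (pow_ne_zero k (hbpos t).ne'), Real.log_pow]
      have hLrel : Real.log Cr = ((k:ℝ) - 1) * L0 := by
        rw [hL0]; field_simp
      have hexpand : -Real.log (bseq δ Cr k (t+1)) =
          (k:ℝ) * (-Real.log (bseq δ Cr k t)) - ((k:ℝ) - 1) * L0 := by
        rw [hlog, hLrel]; ring
      rw [hexpand, ih]
      ring
  refine ⟨v0, hv0pos, L0, fun t => ?_⟩
  rw [hulin t]
  have hpow : c ^ t ≤ (k:ℝ) ^ t := pow_le_pow_left₀ (by linarith) hck t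
  nlinarith [mul_le_mul_of_nonneg_right hpow hv0pos.le]

end Analysis

section Ball

open Classical in
noncomputable def ball (G : SimpleGraph V) [∀ v, Fintype (G.neighborSet v)] (i : V) :
    ℕ → Finset V
  | 0 => {i}
  | (t+1) => ball G i t ∪ (ball G i t).biUnion (fun v => G.neighborFinset v)

open Classical in
lemma ball_adj_subset {i u : V} (hadj : G.Adj i u) :
    ∀ t, ball G u t ⊆ ball G i (t+1) := by
  intro t
  induction t with
  | zero =>
    intro w hw
    simp only [ball, Finset.mem_singleton] at hw
    subst hw
    simp only [ball]
    refine Finset.mem_union_right _ (Finset.mem_biUnion.mpr ⟨i, Finset.mem_singleton_self i, ?_⟩)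
    exact (G.mem_neighborFinset i w).mpr hadj
  | succ t ih =>
    show ball G u t ∪ (ball G u t).biUnion _ ⊆ ball G i (t+1) ∪ (ball G i (t+1)).biUnion _
    refine Finset.union_subset (ih.trans Finset.subset_union_left) ?_
    refine Finset.Subset.trans (Finset.biUnion_subset_biUnion_of_subset_left _ ih) ?_
    exact Finset.subset_union_right

lemma ball_forces (hdeg : ∀ v, 0 < (G.neighborFinset v).card) {x : V → ℤ} {c : ℕ → V → ℤ} :
    ∀ (t : ℕ) (i : V), (∀ v ∈ ball G i t, x v = -1) → fdyn G ∅ x c t i = -1 := by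
  intro t
  induction t with
  | zero =>
    intro i h
    have := h i (by simp [ball])
    simp [fdyn, this]
  | succ t ih =>
    intro i h
    have hnb : ∀ u ∈ G.neighborFinset i, fdyn G ∅ x c t u = -1 := by
      intro u hu
      exact ih u (fun v hv => h v (ball_adj_subset ((G.mem_neighborFinset i u).mp hu) t hv))
    have hsum : ∑ u ∈ G.neighborFinset i, fdyn G ∅ x c t u =
        -((G.neighborFinset i).card : ℤ) := by
      rw [Finset.sum_congr rfl hnb, Finset.sum_const, nsmul_eq_mul, mul_neg, mul_one]
    have hneg : (∑ u ∈ G.neighborFinset i, fdyn G ∅ x c t u) < 0 := by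
      rw [hsum]
      have := hdeg i
      simp only [neg_neg, Left.neg_neg_iff]
      exact_mod_cast this
    simp only [fdyn, if_neg (Set.notMem_empty i), if_neg (by omega : ¬ 0 < ∑ u ∈ G.neighborFinset i, fdyn G ∅ x c t u), if_pos hneg]

end Ball
end Det

/-- Doubly exponential convergence of majority dynamics on an undirected
`d`-regular tree, `d ≥ 5`. The binary state `s ∈ {-1,+1}` has uniform prior
(the law `μ` is the even mixture of the conditional laws `μp`, `μm` given
`s = +1`, `s = -1`); initial votes are correct with probability `1-δ`,
independently given `s` (together with the fair tie-breaking coins); votes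
evolve by majority of neighbors with fair-coin tie-breaking. If
`0 < δ < (2e(d-1)/(d-2))^{-(d-2)/(d-4)}`, then for every node `i`,
`-log P(σ̂_i(t) ≠ s) ∈ Ω(((d-2)/2)^t)`. -/
theorem majority_dynamics_doubly_exponential {V Ω : Type*} [MeasurableSpace Ω]
    (μ μp μm : Measure Ω) [IsProbabilityMeasure μ]
    [IsProbabilityMeasure μp] [IsProbabilityMeasure μm]
    (hmix : μ = (2 : ENNReal)⁻¹ • μp + (2 : ENNReal)⁻¹ • μm)
    (G : SimpleGraph V) [DecidableRel G.Adj] [∀ v, Fintype (G.neighborSet v)]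
    (d : ℕ) (hd : 5 ≤ d) (hreg : ∀ v, G.degree v = d) (htree : G.IsTree)
    (δ : ℝ) (hδpos : 0 < δ)
    (hδsmall : δ < (2 * Real.exp 1 * ((d : ℝ) - 1) / ((d : ℝ) - 2)) ^
      (-(((d : ℝ) - 2) / ((d : ℝ) - 4))))
    (s : Ω → ℤ) (hs : Measurable s)
    (hsp : μp {ω | s ω = 1} = 1) (hsm : μm {ω | s ω = -1} = 1)
    (vote : ℕ → V → Ω → ℤ) (coin : ℕ → V → Ω → ℤ)
    (hmeas : ∀ t v, Measurable (vote t v))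
    (hcmeas : ∀ t v, Measurable (coin t v))
    (hvals : ∀ v ω, vote 0 v ω = 1 ∨ vote 0 v ω = -1)
    (hcvals : ∀ t v ω, coin t v ω = 1 ∨ coin t v ω = -1)
    (hinitp : ∀ v, (μp {ω | vote 0 v ω = -1}).toReal = δ)
    (hinitm : ∀ v, (μm {ω | vote 0 v ω = 1}).toReal = δ)
    (hcoinp : ∀ t v, (μp {ω | coin t v ω = 1}).toReal = 1 / 2)
    (hcoinm : ∀ t v, (μm {ω | coin t v ω = 1}).toReal = 1 / 2)
    (hindp : iIndepFun
      (Sum.elim (fun v : V => vote 0 v) (fun p : ℕ × V => coin p.1 p.2)) μp)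
    (hindm : iIndepFun
      (Sum.elim (fun v : V => vote 0 v) (fun p : ℕ × V => coin p.1 p.2)) μm)
    (hupd : ∀ t v ω, vote (t + 1) v ω =
      if 0 < ∑ j ∈ G.neighborFinset v, vote t j ω then 1
      else if (∑ j ∈ G.neighborFinset v, vote t j ω) < 0 then -1
      else coin t v ω) :
    ∀ i : V, ∃ A > (0 : ℝ), ∃ B : ℝ, ∀ t : ℕ,
      A * (((d : ℝ) - 2) / 2) ^ t - B ≤
        -Real.log ((μ {ω | vote t i ω ≠ s ω}).toReal) := by
  classical
  intro i
  have hδ0 : 0 ≤ δ := hδpos.le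
  -- values of votes at all times
  have hvals' : ∀ t v ω, vote t v ω = 1 ∨ vote t v ω = -1 := by
    intro t
    induction t with
    | zero => exact hvals
    | succ t ih =>
      intro v ω
      rw [hupd]
      split_ifs with h1 h2
      · exact Or.inl rfl
      · exact Or.inr rfl
      · exact hcvals t v ω
  -- identification with the deterministic dynamics
  have hveq : ∀ t v ω, vote t v ω =
      fdyn G ∅ (fun w => vote 0 w ω) (fun r w => coin r w ω) t v := by
    intro t
    induction t with
    | zero => intro v ω; simp [fdyn]
    | succ t ih =>
      intro v ω
      have hsum : ∑ j ∈ G.neighborFinset v,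
          fdyn G ∅ (fun w => vote 0 w ω) (fun r w => coin r w ω) t j =
          ∑ j ∈ G.neighborFinset v, vote t j ω :=
        Finset.sum_congr rfl fun j _ => (ih j ω).symm
      rw [hupd]
      simp only [fdyn, if_neg (Set.notMem_empty v), hsum]
  -- negated dynamics
  have hveqm : ∀ t v ω, -(vote t v ω) =
      fdyn G ∅ (fun w => -(vote 0 w ω)) (fun r w => -(coin r w ω)) t v := by
    intro t
    induction t with
    | zero => intro v ω; simp [fdyn]
    | succ t ih =>
      intro v ω
      have hsum : ∑ j ∈ G.neighborFinset v,
          fdyn G ∅ (fun w => -(vote 0 w ω)) (fun r w => -(coin r w ω)) t j =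
          -(∑ j ∈ G.neighborFinset v, vote t j ω) := by
        rw [← Finset.sum_neg_distrib]
        exact Finset.sum_congr rfl fun j _ => (ih j ω).symm
      simp only [fdyn, if_neg (Set.notMem_empty v), hsum, hupd]
      split_ifs <;> omega
  -- μp-side bound
  have hboundp : ∀ t, μp {ω | vote t i ω = -1} ≤
      ENNReal.ofReal (2 * bseq δ (((d-1).choose ((d-1)/2) : ℕ) : ℝ) ((d-1)/2) t) := by
    have hcore := core (G := G) htree hd hreg μp (fun v => vote 0 v) coin
      (fun v => hmeas 0 v) hcmeas hvals hcvals hδ0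
      (fun v => by rw [← hinitp v, ENNReal.ofReal_toReal (measure_ne_top μp _)]) hindp
    intro t
    have hset : {ω | vote t i ω = -1} =
        {ω | fdyn G ∅ (fun w => vote 0 w ω) (fun r w => coin r w ω) t i = -1} := by
      ext ω
      simp only [Set.mem_setOf_eq]
      rw [hveq t i ω]
    rw [hset]
    exact hcore t i
  -- μm-side bound
  have hboundm : ∀ t, μm {ω | vote t i ω = 1} ≤
      ENNReal.ofReal (2 * bseq δ (((d-1).choose ((d-1)/2) : ℕ) : ℝ) ((d-1)/2) t) := by
    have hindm' : iIndepFun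
        (Sum.elim (fun v : V => fun ω => -(vote 0 v ω))
          (fun p : ℕ × V => fun ω => -(coin p.1 p.2 ω))) μm := by
      have hcomp := hindm.comp (fun _ => fun z : ℤ => -z) (fun _ => measurable_from_top)
      have hfun : (fun a => (fun z : ℤ => -z) ∘
          Sum.elim (fun v : V => vote 0 v) (fun p : ℕ × V => coin p.1 p.2) a) =
          Sum.elim (fun v : V => fun ω => -(vote 0 v ω))
            (fun p : ℕ × V => fun ω => -(coin p.1 p.2 ω)) := by
        funext a
        cases a <;> rfl
      rwa [hfun] at hcomp
    have hcore := core (G := G) htree hd hreg μm (fun v ω => -(vote 0 v ω))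
      (fun r w ω => -(coin r w ω))
      (fun v => (hmeas 0 v).neg) (fun t v => (hcmeas t v).neg)
      (fun v ω => by rcases hvals v ω with h | h <;> simp [h])
      (fun t v ω => by rcases hcvals t v ω with h | h <;> simp [h]) hδ0
      (fun v => by
        have hset : {ω | -(vote 0 v ω) = -1} = {ω | vote 0 v ω = 1} := by
          ext ω; simp only [Set.mem_setOf_eq]; omega
        rw [hset, ← hinitm v, ENNReal.ofReal_toReal (measure_ne_top μm _)]) hindm'
    intro t
    have hset : {ω | vote t i ω = 1} =
        {ω | fdyn G ∅ (fun w => -(vote 0 w ω)) (fun r w => -(coin r w ω)) t i = -1} := by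
      ext ω
      simp only [Set.mem_setOf_eq]
      rw [← hveqm t i ω]
      omega
    rw [hset]
    exact hcore t i
  -- translate events involving s
  have hPp : ∀ t, μp {ω | vote t i ω ≠ s ω} = μp {ω | vote t i ω = -1} := by
    intro t
    have hnull : μp {ω | s ω = 1}ᶜ = 0 := by
      have hms : MeasurableSet {ω | s ω = 1} := hs (show MeasurableSet {(1:ℤ)} from trivial)
      rw [measure_compl hms (measure_ne_top _ _), hsp, measure_univ, tsub_self]
    have h1 : μp {ω | vote t i ω ≠ s ω} = μp ({ω | vote t i ω ≠ s ω} ∩ {ω | s ω = 1}) :=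
      (measure_inter_conull hnull).symm
    have h2 : μp {ω | vote t i ω = -1} = μp ({ω | vote t i ω = -1} ∩ {ω | s ω = 1}) :=
      (measure_inter_conull hnull).symm
    have hseteq : {ω | vote t i ω ≠ s ω} ∩ {ω | s ω = 1} =
        {ω | vote t i ω = -1} ∩ {ω | s ω = 1} := by
      ext ω
      simp only [Set.mem_inter_iff, Set.mem_setOf_eq]
      constructor
      · rintro ⟨h1', h2'⟩
        refine ⟨?_, h2'⟩
        rcases hvals' t i ω with h | h
        · exact absurd (h.trans h2'.symm) h1'
        · exact h
      · rintro ⟨h1', h2'⟩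
        exact ⟨by omega, h2'⟩
    rw [h1, hseteq, ← h2]
  have hPm : ∀ t, μm {ω | vote t i ω ≠ s ω} = μm {ω | vote t i ω = 1} := by
    intro t
    have hnull : μm {ω | s ω = -1}ᶜ = 0 := by
      have hms : MeasurableSet {ω | s ω = -1} := hs (show MeasurableSet {(-1:ℤ)} from trivial)
      rw [measure_compl hms (measure_ne_top _ _), hsm, measure_univ, tsub_self]
    have h1 : μm {ω | vote t i ω ≠ s ω} = μm ({ω | vote t i ω ≠ s ω} ∩ {ω | s ω = -1}) :=
      (measure_inter_conull hnull).symm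
    have h2 : μm {ω | vote t i ω = 1} = μm ({ω | vote t i ω = 1} ∩ {ω | s ω = -1}) :=
      (measure_inter_conull hnull).symm
    have hseteq : {ω | vote t i ω ≠ s ω} ∩ {ω | s ω = -1} =
        {ω | vote t i ω = 1} ∩ {ω | s ω = -1} := by
      ext ω
      simp only [Set.mem_inter_iff, Set.mem_setOf_eq]
      constructor
      · rintro ⟨h1', h2'⟩
        refine ⟨?_, h2'⟩
        rcases hvals' t i ω with h | h
        · exact h
        · exact absurd (h.trans h2'.symm) h1'
      · rintro ⟨h1', h2'⟩
        exact ⟨by omega, h2'⟩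
    rw [h1, hseteq, ← h2]
  -- mixture formula
  have hmixE : ∀ E : Set Ω, μ E = 2⁻¹ * μp E + 2⁻¹ * μm E := by
    intro E
    rw [hmix]
    simp [Measure.add_apply, Measure.smul_apply, smul_eq_mul]
  -- upper bound on the error probability
  have hPle : ∀ t, μ {ω | vote t i ω ≠ s ω} ≤
      ENNReal.ofReal (2 * bseq δ (((d-1).choose ((d-1)/2) : ℕ) : ℝ) ((d-1)/2) t) := by
    intro t
    rw [hmixE _, hPp t, hPm t]
    calc 2⁻¹ * μp {ω | vote t i ω = -1} + 2⁻¹ * μm {ω | vote t i ω = 1}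
        ≤ 2⁻¹ * ENNReal.ofReal (2 * bseq δ (((d-1).choose ((d-1)/2) : ℕ) : ℝ) ((d-1)/2) t)
          + 2⁻¹ * ENNReal.ofReal (2 * bseq δ (((d-1).choose ((d-1)/2) : ℕ) : ℝ) ((d-1)/2) t) := by
          gcongr
          · exact hboundp t
          · exact hboundm t
      _ = ENNReal.ofReal (2 * bseq δ (((d-1).choose ((d-1)/2) : ℕ) : ℝ) ((d-1)/2) t) := by
          rw [← add_mul, ENNReal.inv_two_add_inv_two, one_mul]
  -- lower bound: positivity
  have hppos : ∀ t, 0 < μ {ω | vote t i ω ≠ s ω} := by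
    intro t
    have hindp' : iIndep (fun a => MeasurableSpace.comap
        (Sum.elim (fun v : V => vote 0 v) (fun p : ℕ × V => coin p.1 p.2) a) inferInstance)
        μp := hindp
    have hball : μp (⋂ v ∈ ball G i t, {ω | vote 0 v ω = -1}) =
        ENNReal.ofReal δ ^ (ball G i t).card := by
      have hmeasint := hindp'.meas_biInter (S := (ball G i t).image (Sum.inl : V → V ⊕ ℕ × V))
        (s := fun a => Sum.elim (fun v => {ω | vote 0 v ω = -1}) (fun _ => Set.univ) a)
        (fun a ha => by
          rcases a with v | p
          · exact ⟨{-1}, trivial, rfl⟩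
          · simp only [Finset.mem_image] at ha
            obtain ⟨v, _, hv⟩ := ha
            exact absurd hv (by simp))
      have hseteq : (⋂ a ∈ (ball G i t).image (Sum.inl : V → V ⊕ ℕ × V),
          Sum.elim (fun v => {ω | vote 0 v ω = -1}) (fun _ => Set.univ) a) =
          ⋂ v ∈ ball G i t, {ω | vote 0 v ω = -1} := by
        ext ω
        simp only [Set.mem_iInter, Finset.mem_image]
        constructor
        · intro h v hv
          exact h (Sum.inl v) ⟨v, hv, rfl⟩
        · rintro h a ⟨v, hv, rfl⟩
          exact h v hv
      have hprodeq : ∏ a ∈ (ball G i t).image (Sum.inl : V → V ⊕ ℕ × V),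
          μp (Sum.elim (fun v => {ω | vote 0 v ω = -1}) (fun _ => Set.univ) a) =
          ENNReal.ofReal δ ^ (ball G i t).card := by
        rw [Finset.prod_image (fun a _ b _ h => Sum.inl_injective h)]
        simp only [Sum.elim_inl]
        have : ∀ v ∈ ball G i t, μp {ω | vote 0 v ω = -1} = ENNReal.ofReal δ := fun v _ => by
          rw [← hinitp v, ENNReal.ofReal_toReal (measure_ne_top μp _)]
        rw [Finset.prod_congr rfl this, Finset.prod_const]
      rw [← hseteq, hmeasint, hprodeq]
    have hsubball : (⋂ v ∈ ball G i t, {ω | vote 0 v ω = -1}) ⊆ {ω | vote t i ω = -1} := by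
      intro ω hω
      simp only [Set.mem_iInter, Set.mem_setOf_eq] at hω ⊢
      rw [hveq t i ω]
      refine ball_forces (fun v => ?_) t i (fun v hv => hω v hv)
      rw [G.card_neighborFinset_eq_degree, hreg v]
      omega
    have h1 : (0:ENNReal) < μp {ω | vote t i ω = -1} := by
      refine lt_of_lt_of_le ?_ (le_trans (le_of_eq hball.symm) (measure_mono hsubball))
      exact ENNReal.pow_pos (ENNReal.ofReal_pos.mpr hδpos) _
    have h2 : 2⁻¹ * μp {ω | vote t i ω = -1} ≤ μ {ω | vote t i ω ≠ s ω} := by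
      rw [hmixE _, hPp t]
      exact le_add_right le_rfl
    refine lt_of_lt_of_le ?_ h2
    exact ENNReal.mul_pos (by simp) h1.ne'
  -- assemble
  obtain ⟨A, hApos, L, hAL⟩ := analysis_main d hd hδpos hδsmall
  refine ⟨A, hApos, Real.log 2 - L, fun t => ?_⟩
  have hCr1 : (1:ℝ) ≤ (((d-1).choose ((d-1)/2) : ℕ) : ℝ) := by
    have : 0 < (d-1).choose ((d-1)/2) := Nat.choose_pos (by omega)
    exact_mod_cast this
  have hbpos : 0 < bseq δ (((d-1).choose ((d-1)/2) : ℕ) : ℝ) ((d-1)/2) t :=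
    bseq_pos hδpos (by linarith) _ t
  have hPtoR : (μ {ω | vote t i ω ≠ s ω}).toReal ≤
      2 * bseq δ (((d-1).choose ((d-1)/2) : ℕ) : ℝ) ((d-1)/2) t :=
    ENNReal.toReal_le_of_le_ofReal (by linarith) (hPle t)
  have hP0 : 0 < (μ {ω | vote t i ω ≠ s ω}).toReal :=
    ENNReal.toReal_pos (hppos t).ne' (measure_ne_top _ _)
  have hlog : Real.log ((μ {ω | vote t i ω ≠ s ω}).toReal) ≤
      Real.log (2 * bseq δ (((d-1).choose ((d-1)/2) : ℕ) : ℝ) ((d-1)/2) t) :=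
    Real.log_le_log hP0 hPtoR
  rw [Real.log_mul two_ne_zero hbpos.ne'] at hlog
  have hA := hAL t
  linarith
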